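/- Let n ≥ 2 be an integer with sequence a_0 = n, a_{k+1} = a_k^2 - 1, and suppose a_k ≠ 2. Then a_{k+2} has a prime divisor that does not divide a_k * a_{k+1}. -/
import Mathlib


/-- The sequence `a 0 = n`, `a (k+1) = (a k)^2 - 1`. -/
def seqA (n : ℤ) : ℕ → ℤ
  | 0 => n
  | k + 1 => (seqA n k) ^ 2 - 1

lemma seqA_ge (n : ℤ) (hn : 2 ≤ n) : ∀ k, 2 ≤ seqA n k := by
  intro k
  induction k with
  | zero => exact hn
  | succ k ih =>
    show 2 ≤ (seqA n k) ^ 2 - 1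
    nlinarith

theorem new_prime_divisor (n : ℤ) (hn : 2 ≤ n) (k : ℕ) (hk : seqA n k ≠ 2) :
    ∃ p : ℕ, p.Prime ∧ (p : ℤ) ∣ seqA n (k + 2) ∧ ¬ (p : ℤ) ∣ seqA n k * seqA n (k + 1) := by
  set m := seqA n k with hm
  have h2 : 2 ≤ m := seqA_ge n hn k
  have h3 : 3 ≤ m := by omega
  have hA1 : seqA n (k + 1) = m ^ 2 - 1 := rfl
  have hA2 : seqA n (k + 2) = m ^ 2 * (m ^ 2 - 2) := by
    show (seqA n (k + 1)) ^ 2 - 1 = _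
    rw [hA1]; ring
  obtain ⟨p, hp, hpodd, hpd⟩ : ∃ p : ℕ, p.Prime ∧ p ≠ 2 ∧ (p : ℤ) ∣ m ^ 2 - 2 := by
    rcases Int.even_or_odd m with he | ho
    · obtain ⟨j, hj⟩ := he
      have hj2 : 2 ≤ j := by omega
      have hnn : (0 : ℤ) ≤ 2 * j ^ 2 - 1 := by nlinarith
      set t := (2 * j ^ 2 - 1).toNat with ht
      have htv : (t : ℤ) = 2 * j ^ 2 - 1 := Int.toNat_of_nonneg hnn
      have ht2 : 2 ≤ t := by
        have h7 : (2 : ℤ) ≤ (t : ℤ) := by rw [htv]; nlinarith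
        exact_mod_cast h7
      refine ⟨t.minFac, Nat.minFac_prime (by omega), ?_, ?_⟩
      · intro h
        have hd : 2 ∣ t := h ▸ Nat.minFac_dvd t
        have : (2 : ℤ) ∣ (t : ℤ) := by exact_mod_cast hd
        rw [htv] at this
        omega
      · have hd : (t.minFac : ℤ) ∣ (t : ℤ) := Int.natCast_dvd_natCast.mpr (Nat.minFac_dvd t)
        have : m ^ 2 - 2 = 2 * (t : ℤ) := by rw [htv, hj]; ring
        rw [this]
        exact Dvd.dvd.mul_left hd 2
    · have hnn : (0 : ℤ) ≤ m ^ 2 - 2 := by nlinarith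
      set t := (m ^ 2 - 2).toNat with ht
      have htv : (t : ℤ) = m ^ 2 - 2 := Int.toNat_of_nonneg hnn
      have ht2 : 2 ≤ t := by
        have h7 : (2 : ℤ) ≤ (t : ℤ) := by rw [htv]; nlinarith
        exact_mod_cast h7
      refine ⟨t.minFac, Nat.minFac_prime (by omega), ?_, ?_⟩
      · intro h
        have hd : 2 ∣ t := h ▸ Nat.minFac_dvd t
        have h2' : (2 : ℤ) ∣ (t : ℤ) := by exact_mod_cast hd
        rw [htv] at h2'
        obtain ⟨i, hi⟩ := ho
        obtain ⟨c, hc⟩ := h2'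
        have : m ^ 2 - 2 = 2 * (2 * i ^ 2 + 2 * i - 1) + 1 := by rw [hi]; ring
        omega
      · have hd : (t.minFac : ℤ) ∣ (t : ℤ) := Int.natCast_dvd_natCast.mpr (Nat.minFac_dvd t)
        rwa [htv] at hd
  refine ⟨p, hp, ?_, ?_⟩
  · rw [hA2]
    exact Dvd.dvd.mul_left hpd _
  · intro hdvd
    have hpI : Prime (p : ℤ) := Nat.prime_iff_prime_int.mp hp
    rw [hA1] at hdvd
    rcases hpI.dvd_mul.mp hdvd with h | h
    · have hsq : (p : ℤ) ∣ m ^ 2 := by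
        have := h.mul_left m
        rwa [← sq] at this
      have h2d : (p : ℤ) ∣ 2 := by
        have := dvd_sub hsq hpd
        simpa using this
      have : (p : ℤ) ≤ 2 := Int.le_of_dvd (by norm_num) h2d
      have hp2 := hp.two_le
      have : p ≤ 2 := by exact_mod_cast this
      omega
    · have h1 : (p : ℤ) ∣ 1 := by
        have := dvd_sub h hpd
        simpa using this
      have : (p : ℤ) ≤ 1 := Int.le_of_dvd one_pos h1
      have hp2 := hp.two_le
      have : p ≤ 1 := by exact_mod_cast this
      omega
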